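/- For every integer n ≥ 2, the Lie algebra u_n of triangular polynomial derivations is a solvable Lie algebra but not a nilpotent Lie algebra. -/

import Mathlib

open MvPolynomial

noncomputable section


/-- If a derivation of `MvPolynomial σ K` maps every generator `X j`, `j ∈ s`, into the
subalgebra `supported K s` of polynomials supported on `s`, then it maps the whole of
`supported K s` into itself. -/
theorem Derivation.mem_supported_of_forall_mem
    {K : Type*} [CommRing K] {σ : Type*} (s : Set σ)
    (D : Derivation K (MvPolynomial σ K) (MvPolynomial σ K))
    (h : ∀ j ∈ s, D (X j) ∈ supported K s)
    {p : MvPolynomial σ K} (hp : p ∈ supported K s) : D p ∈ supported K s := by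
  rw [supported_eq_adjoin_X] at hp
  induction hp using Algebra.adjoin_induction with
  | mem x hx =>
    obtain ⟨j, hj, rfl⟩ := hx
    exact h j hj
  | algebraMap r =>
    rw [Derivation.map_algebraMap]
    exact zero_mem _
  | add x y hx hy ihx ihy =>
    rw [map_add]
    exact add_mem ihx ihy
  | mul x y hx hy ihx ihy =>
    rw [Derivation.leibniz, smul_eq_mul, smul_eq_mul]
    rw [← supported_eq_adjoin_X] at hx hy
    exact add_mem (mul_mem hx ihy) (mul_mem hy ihx)

/-- If a derivation of `MvPolynomial σ K` kills every generator `X j`, `j ∈ s`, then it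
kills the whole subalgebra `supported K s`. -/
theorem Derivation.eq_zero_of_forall_eq_zero
    {K : Type*} [CommRing K] {σ : Type*} (s : Set σ)
    (D : Derivation K (MvPolynomial σ K) (MvPolynomial σ K))
    (h : ∀ j ∈ s, D (X j) = 0)
    {p : MvPolynomial σ K} (hp : p ∈ supported K s) : D p = 0 := by
  rw [supported_eq_adjoin_X] at hp
  induction hp using Algebra.adjoin_induction with
  | mem x hx =>
    obtain ⟨j, hj, rfl⟩ := hx
    exact h j hj
  | algebraMap r =>
    rw [Derivation.map_algebraMap]
  | add x y hx hy ihx ihy =>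
    rw [map_add, ihx, ihy, add_zero]
  | mul x y hx hy ihx ihy =>
    rw [Derivation.leibniz, ihx, ihy, smul_zero, smul_zero, add_zero]

/-- The defining condition for the Lie algebra `u_n = K∂₁ ⊕ P₁∂₂ ⊕ ⋯ ⊕ P_{n-1}∂ₙ` of
triangular polynomial derivations of `P_n = K[x₁,…,xₙ]` (variables indexed by `Fin n`,
zero-based): a derivation `D` of `P_n` is triangular iff, for every `i`, the polynomial
`D (X i)` only involves the variables `X j` with `j < i` (so the coefficient of `∂_i`
lies in `P_{i-1}`, where `P₀ = K`). -/
def triSet (K : Type*) [Field K] (n : ℕ) :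
    Set (Derivation K (MvPolynomial (Fin n) K) (MvPolynomial (Fin n) K)) :=
  {D | ∀ i : Fin n, D (X i) ∈ supported K {j : Fin n | (j : ℕ) < (i : ℕ)}}

theorem supported_upward {K : Type*} [Field K] {n : ℕ}
    (p : MvPolynomial (Fin n) K) (s t : Set (Fin n)) (hst : s ⊆ t)
    (hp : p ∈ supported K s) : p ∈ supported K t :=
  supported_mono hst hp

theorem triSet_stable {K : Type*} [Field K] {n : ℕ}
    {D : Derivation K (MvPolynomial (Fin n) K) (MvPolynomial (Fin n) K)}
    (hD : D ∈ triSet K n) (i : Fin n) :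
    ∀ j ∈ {j' : Fin n | (j' : ℕ) < (i : ℕ)},
      D (X j) ∈ supported K {j' : Fin n | (j' : ℕ) < (i : ℕ)} := by
  intro j hj
  refine supported_upward _ {j' : Fin n | (j' : ℕ) < (j : ℕ)} _ ?_ (hD j)
  intro l hl
  have hl' : (l : ℕ) < (j : ℕ) := hl
  have hj' : (j : ℕ) < (i : ℕ) := hj
  exact lt_trans hl' hj'

theorem triSet_lie {K : Type*} [Field K] {n : ℕ}
    {a b : Derivation K (MvPolynomial (Fin n) K) (MvPolynomial (Fin n) K)}
    (ha : a ∈ triSet K n) (hb : b ∈ triSet K n) : ⁅a, b⁆ ∈ triSet K n := by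
  intro i
  rw [Derivation.commutator_apply]
  exact sub_mem
    (Derivation.mem_supported_of_forall_mem _ a (triSet_stable ha i) (hb i))
    (Derivation.mem_supported_of_forall_mem _ b (triSet_stable hb i) (ha i))

/-- The Lie algebra `u_n = K∂₁ ⊕ P₁∂₂ ⊕ ⋯ ⊕ P_{n-1}∂ₙ` of triangular polynomial
derivations, as a Lie subalgebra of the Lie algebra of all `K`-derivations of the
polynomial algebra `P_n = K[x₁,…,xₙ]`. -/
def triangular (K : Type*) [Field K] (n : ℕ) :
    LieSubalgebra K (Derivation K (MvPolynomial (Fin n) K) (MvPolynomial (Fin n) K)) where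
  carrier := triSet K n
  add_mem' := fun {a b} ha hb i => by
    rw [Derivation.add_apply]; exact add_mem (ha i) (hb i)
  zero_mem' := fun i => by
    rw [Derivation.zero_apply]; exact zero_mem _
  smul_mem' := fun c a ha i => by
    rw [Derivation.smul_apply]; exact Subalgebra.smul_mem _ (ha i) c
  lie_mem' := fun {a b} ha hb => triSet_lie ha hb

theorem mem_triangular_iff {K : Type*} [Field K] {n : ℕ}
    (D : Derivation K (MvPolynomial (Fin n) K) (MvPolynomial (Fin n) K)) :
    D ∈ triangular K n ↔
      ∀ i : Fin n, D (X i) ∈ supported K {j : Fin n | (j : ℕ) < (i : ℕ)} := Iff.rfl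

section Aux

variable {K : Type*} [Field K] {n : ℕ}

abbrev TriDer (K : Type*) [Field K] (n : ℕ) :=
  Derivation K (MvPolynomial (Fin n) K) (MvPolynomial (Fin n) K)

theorem tri_val_add (a b : ↥(triangular K n)) : ((a + b : ↥(triangular K n)) : TriDer K n)
    = (a : TriDer K n) + (b : TriDer K n) := rfl

theorem tri_val_smul (c : K) (a : ↥(triangular K n)) :
    ((c • a : ↥(triangular K n)) : TriDer K n) = c • (a : TriDer K n) := rfl

theorem tri_val_bracket (a b : ↥(triangular K n)) :
    ((⁅a, b⁆ : ↥(triangular K n)) : TriDer K n) = ⁅(a : TriDer K n), (b : TriDer K n)⁆ := rfl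

/-- The ideal of triangular derivations killing the first `k` variables. -/
def killIdeal (K : Type*) [Field K] (n k : ℕ) : LieIdeal K ↥(triangular K n) where
  carrier := {D | ∀ i : Fin n, (i : ℕ) < k → (D : TriDer K n) (X i) = 0}
  add_mem' := fun {a b} ha hb i hi => by
    rw [tri_val_add, Derivation.add_apply, ha i hi, hb i hi, add_zero]
  zero_mem' := fun i _ => rfl
  smul_mem' := fun c a ha i hi => by
    rw [tri_val_smul, Derivation.smul_apply, ha i hi, smul_zero]
  lie_mem := fun {x y} hy i hi => by
    rw [tri_val_bracket, Derivation.commutator_apply, hy i hi, map_zero, zero_sub, neg_eq_zero]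
    exact Derivation.eq_zero_of_forall_eq_zero _ _
      (fun j hj => hy j (lt_trans hj hi)) (x.2 i)

theorem derived_le_killIdeal (K : Type*) [Field K] (n : ℕ) (k : ℕ) :
    LieAlgebra.derivedSeries K ↥(triangular K n) k ≤ killIdeal K n k := by
  induction k with
  | zero => exact fun x _ i hi => absurd hi (Nat.not_lt_zero _)
  | succ k ih =>
    have h1 : LieAlgebra.derivedSeries K ↥(triangular K n) (k + 1)
        = ⁅LieAlgebra.derivedSeries K ↥(triangular K n) k,
           LieAlgebra.derivedSeries K ↥(triangular K n) k⁆ := by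
      rw [LieAlgebra.derivedSeries_def, LieAlgebra.derivedSeriesOfIdeal_succ]
    rw [h1]
    refine le_trans (LieSubmodule.mono_lie ih ih) ?_
    rw [LieSubmodule.lieIdeal_oper_eq_span, LieSubmodule.lieSpan_le]
    rintro z ⟨x, y, rfl⟩
    intro i hi
    show ((⁅(x : ↥(triangular K n)), (y : ↥(triangular K n))⁆ : ↥(triangular K n))
      : TriDer K n) (X i) = 0
    rw [tri_val_bracket, Derivation.commutator_apply]
    have hx0 : ∀ j : Fin n, (j : ℕ) < (i : ℕ) →
        ((x : ↥(triangular K n)) : TriDer K n) (X j) = 0 :=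
      fun j hj => x.2 j (by omega)
    have hy0 : ∀ j : Fin n, (j : ℕ) < (i : ℕ) →
        ((y : ↥(triangular K n)) : TriDer K n) (X j) = 0 :=
      fun j hj => y.2 j (by omega)
    rw [Derivation.eq_zero_of_forall_eq_zero _ _ hx0 ((y : ↥(triangular K n)).2 i),
      Derivation.eq_zero_of_forall_eq_zero _ _ hy0 ((x : ↥(triangular K n)).2 i), sub_zero]

/-- The derivation `∂_{i0}`. -/
def pdD (K : Type*) [Field K] {n : ℕ} (i0 : Fin n) : TriDer K n :=
  mkDerivation K (fun j => if j = i0 then 1 else 0)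

/-- The derivation `x_{i0}^m ∂_{i1}`. -/
def gD (K : Type*) [Field K] {n : ℕ} (i0 i1 : Fin n) (m : ℕ) : TriDer K n :=
  mkDerivation K (fun j => if j = i1 then X i0 ^ m else 0)

theorem pdD_mem (i0 : Fin n) : pdD K i0 ∈ triangular K n := by
  intro i
  rw [pdD, mkDerivation_X]
  split_ifs
  · exact one_mem _
  · exact zero_mem _

theorem gD_mem {i0 i1 : Fin n} (h01 : (i0 : ℕ) < (i1 : ℕ)) (m : ℕ) :
    gD K i0 i1 m ∈ triangular K n := by
  intro i
  rw [gD, mkDerivation_X]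
  by_cases h : i = i1
  · rw [if_pos h]
    refine pow_mem (X_mem_supported.mpr ?_) m
    have : (i0 : ℕ) < (i : ℕ) := by rw [h]; exact h01
    exact this
  · rw [if_neg h]
    exact zero_mem _

theorem pdD_bracket_gD {i0 i1 : Fin n} (h01 : i1 ≠ i0) (m : ℕ) :
    ⁅pdD K i0, gD K i0 i1 (m + 1)⁆ = ((m : K) + 1) • gD K i0 i1 m := by
  apply derivation_ext
  intro i
  rw [Derivation.commutator_apply, Derivation.smul_apply]
  by_cases h : i = i1
  · have hi0 : i ≠ i0 := by rw [h]; exact h01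
    simp only [gD, pdD, mkDerivation_X, if_pos h, if_neg hi0, map_zero, sub_zero]
    rw [Derivation.leibniz_pow, Nat.add_sub_cancel, mkDerivation_X, if_pos rfl, smul_eq_mul,
      mul_one, ← Nat.cast_smul_eq_nsmul K (m + 1) (X i0 ^ m)]
    push_cast
    ring_nf
  · simp only [gD, pdD, mkDerivation_X, if_neg h, map_zero, smul_zero, zero_sub, neg_eq_zero]
    split_ifs
    · exact Derivation.map_one_eq_zero _
    · exact map_zero _

end Aux

/-- For every integer `n ≥ 2`, the Lie algebra `u_n` of triangular
polynomial derivations is a solvable but not nilpotent Lie algebra. -/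
theorem triangular_isSolvable_and_not_isNilpotent
    (K : Type*) [Field K] [CharZero K] (n : ℕ) (hn : 2 ≤ n) :
    LieAlgebra.IsSolvable ↥(triangular K n) ∧
      ¬ LieRing.IsNilpotent ↥(triangular K n) := by
  constructor
  · refine (LieAlgebra.isSolvable_iff K _).mpr ⟨n, ?_⟩
    refine le_bot_iff.mp (le_trans (derived_le_killIdeal K n n) ?_)
    intro D hD
    have hval : (D : TriDer K n) = 0 :=
      derivation_ext fun i => by rw [hD i i.isLt]; rfl
    rw [LieSubmodule.mem_bot]
    exact Subtype.ext hval
  · intro hnil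
    obtain ⟨k, hk⟩ := (LieModule.isNilpotent_iff K _ _).mp hnil
    have h0 : 0 < n := by omega
    have h1 : 1 < n := by omega
    let i0 : Fin n := ⟨0, h0⟩
    let i1 : Fin n := ⟨1, h1⟩
    have hne01 : i1 ≠ i0 := by simp [i0, i1, Fin.ext_iff]
    have h01 : (i0 : ℕ) < (i1 : ℕ) := Nat.zero_lt_one
    let PD : ↥(triangular K n) := ⟨pdD K i0, pdD_mem i0⟩
    let G : ℕ → ↥(triangular K n) := fun m => ⟨gD K i0 i1 m, gD_mem h01 m⟩
    have hbr' : ∀ m : ℕ, ⁅PD, G (m + 1)⁆ = ((m : K) + 1) • G m := by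
      intro m
      apply Subtype.ext
      rw [tri_val_bracket, tri_val_smul]
      exact pdD_bracket_gD hne01 m
    have hlcs : ∀ k : ℕ, ∀ m : ℕ,
        G m ∈ LieModule.lowerCentralSeries K ↥(triangular K n) ↥(triangular K n) k := by
      intro k
      induction k with
      | zero => exact fun m => LieSubmodule.mem_top _
      | succ k ih =>
        intro m
        have hss : ⁅PD, G (m + 1)⁆ ∈
            LieModule.lowerCentralSeries K ↥(triangular K n) ↥(triangular K n) (k + 1) := by
          rw [LieModule.lowerCentralSeries_succ]
          exact LieSubmodule.lie_mem_lie (LieSubmodule.mem_top PD) (ih (m + 1))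
        have hm1 : ((m : K) + 1) ≠ 0 := by
          exact_mod_cast (Nat.cast_ne_zero (R := K)).mpr (Nat.succ_ne_zero m)
        have h2 : G m = ((m : K) + 1)⁻¹ • ⁅PD, G (m + 1)⁆ := by
          rw [hbr' m, smul_smul, inv_mul_cancel₀ hm1, one_smul]
        rw [h2]
        exact SMulMemClass.smul_mem _ hss
    have hG0 : G 0 ≠ 0 := by
      intro h
      have hval : gD K i0 i1 0 = 0 := congrArg Subtype.val h
      have h2 : gD K i0 i1 0 (X i1) = 0 := by rw [hval]; rfl
      rw [gD, mkDerivation_X, if_pos rfl, pow_zero] at h2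
      exact one_ne_zero h2
    have : G 0 ∈ (⊥ : LieSubmodule K ↥(triangular K n) ↥(triangular K n)) := hk ▸ hlcs k 0
    exact hG0 ((LieSubmodule.mem_bot _).mp this)
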